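/- Suppose JA is an affine map. Then for all γ ∈ (0,1), the perturbed resolvent and perturbed reflected resolvent commute: JAγ ∘ RAγ = RAγ ∘ JAγ, i.e. for every x ∈ X, JAγ(RAγ(x)) = RAγ(JAγ(x)). -/
import Mathlib

theorem aacaStmt7 {X : Type*} [NormedAddCommGroup X] [InnerProductSpace ℝ X] [CompleteSpace X]
    (JA : X → X)
    (hJA : ∀ (x y : X) (t : ℝ), JA (t • x + (1 - t) • y) = t • JA x + (1 - t) • JA y)
    (w : X) (γ : ℝ) (hγ : γ ∈ Set.Ioo (0 : ℝ) 1)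
    (JAγ RAγ : X → X)
    (hJAγ : ∀ x, JAγ x = γ • JA x + (1 - γ) • w)
    (hRAγ : ∀ x, RAγ x = (2 * γ) • JA x + (2 * (1 - γ)) • w - x) :
    ∀ x : X, JAγ (RAγ x) = RAγ (JAγ x) := by
  intro x
  have h2 : JA (RAγ x) = (2:ℝ) • JA (JAγ x) + (1 - (2:ℝ)) • JA x := by
    rw [← hJA]
    congr 1
    rw [hRAγ, hJAγ]
    module
  rw [hJAγ, h2, hRAγ, hJAγ]
  module
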